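/- Spatial error of the time reconstruction, second time derivative (Lemma 4.3 with ℓ = 2): assume all values of V lie in the closed subspace F. Then sup_{t ∈ [t₀,t₁]} ‖ρ₀ · (Û − PÛ)''(t)‖_H ≤ c₃(q;2) · τ⁻¹ · ‖ρ₀ · P^⊥ w₀‖_H, where c₃(q;2) = 4√2 · q(q+1). -/

import Mathlib

open scoped RealInnerProductSpace
open MeasureTheory Polynomial

set_option linter.unusedVariables false

noncomputable section LegendreAux

noncomputable def SLbase (n : ℕ) : ℝ[X] := (X ^ 2 - X) ^ n

noncomputable def SL (n : ℕ) : ℝ[X] := derivative^[n] (SLbase n)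

lemma X2X : (X ^ 2 - X : ℝ[X]) = X * (X - C 1) := by rw [C_1]; ring

lemma SLbase_monic (n : ℕ) : (SLbase n).Monic := by
  have h : (X ^ 2 - X : ℝ[X]).Monic := by
    rw [X2X]; exact monic_X.mul (monic_X_sub_C 1)
  exact h.pow n

lemma SLbase_natDegree (n : ℕ) : (SLbase n).natDegree = 2 * n := by
  have h2 : (X ^ 2 - X : ℝ[X]).natDegree = 2 := by
    rw [X2X, (monic_X (R := ℝ)).natDegree_mul (monic_X_sub_C 1), natDegree_X,
      natDegree_X_sub_C]
  have := ((SLbase_monic 1).natDegree_pow) -- dummy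
  unfold SLbase
  rw [((by rw [X2X]; exact monic_X.mul (monic_X_sub_C 1) : (X ^ 2 - X : ℝ[X]).Monic)).natDegree_pow, h2, mul_comm]

lemma SL_natDegree (n : ℕ) : (SL n).natDegree ≤ n := by
  have := natDegree_iterate_derivative (SLbase n) n
  rwa [SLbase_natDegree, two_mul, Nat.add_sub_cancel] at this

lemma SL_coeff (n : ℕ) : (SL n).coeff n = ((2 * n).descFactorial n : ℝ) := by
  unfold SL
  rw [coeff_iterate_derivative]
  have : (SLbase n).coeff (n + n) = 1 := by
    have := (SLbase_monic n).leadingCoeff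
    rwa [leadingCoeff, SLbase_natDegree, two_mul] at this
  rw [this, two_mul]
  simp [nsmul_eq_mul]

lemma base_factor (n : ℕ) : ∀ k, k ≤ n → ∃ c : ℝ[X],
    derivative^[k] (SLbase n) = X ^ (n - k) * (X - C 1) ^ (n - k) * c := by
  intro k
  induction k with
  | zero =>
    intro _
    exact ⟨1, by simp [SLbase, X2X, mul_pow]⟩
  | succ k ih =>
    intro hk
    obtain ⟨c, hc⟩ := ih (le_of_lt hk)
    obtain ⟨m, hm⟩ : ∃ m, n - k = m + 1 := ⟨n - (k+1), by omega⟩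
    refine ⟨(m+1 : ℝ[X]) * (X - C 1) * c + (m+1 : ℝ[X]) * X * c + X * (X - C 1) * derivative c, ?_⟩
    rw [Function.iterate_succ_apply', hc, hm]
    have hnk : n - (k + 1) = m := by omega
    rw [hnk]
    simp only [derivative_mul, derivative_pow, derivative_X, derivative_sub, derivative_C,
      sub_zero, mul_one, C_1, derivative_one, C_add, map_natCast]
    push_cast
    ring

lemma base_eval_zero (n k : ℕ) (hk : k < n) : (derivative^[k] (SLbase n)).eval 0 = 0 := by
  obtain ⟨c, hc⟩ := base_factor n k hk.le
  obtain ⟨m, hm⟩ : ∃ m, n - k = m + 1 := ⟨n - (k+1), by omega⟩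
  rw [hc, hm]
  simp [pow_succ]

lemma base_eval_one (n k : ℕ) (hk : k < n) : (derivative^[k] (SLbase n)).eval 1 = 0 := by
  obtain ⟨c, hc⟩ := base_factor n k hk.le
  obtain ⟨m, hm⟩ : ∃ m, n - k = m + 1 := ⟨n - (k+1), by omega⟩
  rw [hc, hm]
  simp [pow_succ]

lemma SLbase_def (n : ℕ) : SLbase n = (X ^ 2 - X) ^ n := rfl

lemma SL_def (n : ℕ) : SL n = derivative^[n] (SLbase n) := rfl

lemma SL_one : SL 0 = 1 := by
  rw [SL_def, Function.iterate_zero_apply, SLbase_def, pow_zero]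


lemma poly_intInt (f : ℝ[X]) (g : ℝ[X]) (a b : ℝ) :
    IntervalIntegrable (fun x => f.eval x * g.eval x) MeasureTheory.volume a b :=
  ((f.continuous).mul (g.continuous)).intervalIntegrable a b

lemma poly_ibp (f g : ℝ[X]) (a b : ℝ) :
    ∫ x in a..b, (derivative f).eval x * g.eval x
      = f.eval b * g.eval b - f.eval a * g.eval a
        - ∫ x in a..b, f.eval x * (derivative g).eval x := by
  have h := intervalIntegral.integral_deriv_mul_eq_sub
    (u := fun x => f.eval x) (v := fun x => g.eval x)
    (u' := fun x => (derivative f).eval x) (v' := fun x => (derivative g).eval x)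
    (fun x _ => f.hasDerivAt x) (fun x _ => g.hasDerivAt x)
    (((derivative f).continuous).intervalIntegrable a b)
    (((derivative g).continuous).intervalIntegrable a b)
  rw [intervalIntegral.integral_add (poly_intInt (derivative f) g a b)
    (poly_intInt f (derivative g) a b)] at h
  linarith

lemma SL_ibp (n j : ℕ) (hj : j ≤ n) (p : ℝ[X]) :
    ∫ x in (0:ℝ)..1, (SL n).eval x * p.eval x
      = (-1 : ℝ)^j * ∫ x in (0:ℝ)..1,
          (derivative^[n-j] (SLbase n)).eval x * (derivative^[j] p).eval x := by
  induction j with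
  | zero => simp [SL_def]
  | succ j ih =>
    rw [ih (by omega)]
    have h1 : derivative^[n-j] (SLbase n) = derivative (derivative^[n-(j+1)] (SLbase n)) := by
      have h2 : n - j = (n-(j+1)) + 1 := by omega
      rw [h2, Function.iterate_succ_apply']
    rw [h1, poly_ibp, base_eval_zero n _ (by omega), base_eval_one n _ (by omega),
      Function.iterate_succ_apply' derivative j p]
    ring

lemma SL_orth (n : ℕ) (p : ℝ[X]) (hp : p.natDegree < n) :
    ∫ x in (0:ℝ)..1, (SL n).eval x * p.eval x = 0 := by
  rw [SL_ibp n n le_rfl p, iterate_derivative_eq_zero hp]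
  simp

lemma base_iterate_full (n : ℕ) :
    derivative^[2*n] (SLbase n) = C (((2*n).factorial : ℝ)) := by
  have hdeg : (derivative^[2*n] (SLbase n)).natDegree ≤ 0 := by
    have := natDegree_iterate_derivative (SLbase n) (2*n)
    simpa [SLbase_natDegree] using this
  rw [Polynomial.eq_C_of_natDegree_le_zero hdeg, coeff_iterate_derivative]
  have hc : (SLbase n).coeff (2*n) = 1 := by
    have := (SLbase_monic n).leadingCoeff
    rwa [leadingCoeff, SLbase_natDegree] at this
  rw [Nat.zero_add, hc, Nat.descFactorial_self]
  simp

lemma beta_nat (a b : ℕ) : ∫ x in (0:ℝ)..1, x^a * (1-x)^b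
    = (a.factorial : ℝ) * b.factorial / (a+b+1).factorial := by
  induction b generalizing a with
  | zero =>
    simp only [pow_zero, mul_one, integral_pow, Nat.factorial_zero, Nat.cast_one,
      Nat.add_zero]
    rw [Nat.factorial_succ]
    push_cast
    rw [one_pow, zero_pow (by omega)]
    have : ((a:ℝ)+1) ≠ 0 := by positivity
    field_simp
    norm_num
  | succ b ih =>
    have hu : ∀ x ∈ Set.uIcc (0:ℝ) 1, HasDerivAt (fun x : ℝ => x^(a+1))
        (((a:ℝ)+1) * x^a) x := by
      intro x _
      have := hasDerivAt_pow (a+1) x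
      simpa [Nat.add_sub_cancel] using this
    have hv : ∀ x ∈ Set.uIcc (0:ℝ) 1, HasDerivAt (fun x : ℝ => (1-x)^(b+1))
        ((((b:ℝ)+1) * (1-x)^b) * (-1)) x := by
      intro x _
      have hinner : HasDerivAt (fun x : ℝ => 1 - x) (-1) x := by
        simpa using (hasDerivAt_id x).const_sub 1
      have := (hasDerivAt_pow (b+1) (1-x)).comp x hinner
      simpa [Nat.add_sub_cancel, mul_comm, mul_assoc, Function.comp_def] using this
    have h := intervalIntegral.integral_deriv_mul_eq_sub hu hv
      ((by fun_prop : Continuous fun x : ℝ => ((a:ℝ)+1) * x^a).intervalIntegrable 0 1)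
      ((by fun_prop : Continuous fun x : ℝ => (((b:ℝ)+1) * (1-x)^b) * (-1)).intervalIntegrable 0 1)
    have hz : (∫ x in (0:ℝ)..1, (((a:ℝ)+1) * x^a * (1-x)^(b+1)
        + x^(a+1) * ((((b:ℝ)+1) * (1-x)^b) * (-1)))) = 0 := by
      rw [h]
      norm_num
    have hsplit : (∫ x in (0:ℝ)..1, (((a:ℝ)+1) * x^a * (1-x)^(b+1)
        + x^(a+1) * ((((b:ℝ)+1) * (1-x)^b) * (-1))))
        = ((a:ℝ)+1) * (∫ x in (0:ℝ)..1, x^a * (1-x)^(b+1))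
          - ((b:ℝ)+1) * (∫ x in (0:ℝ)..1, x^(a+1) * (1-x)^b) := by
      rw [← intervalIntegral.integral_const_mul, ← intervalIntegral.integral_const_mul,
        ← intervalIntegral.integral_sub
          ((by fun_prop : Continuous fun x : ℝ => ((a:ℝ)+1) * (x^a * (1-x)^(b+1))).intervalIntegrable 0 1)
          ((by fun_prop : Continuous fun x : ℝ => ((b:ℝ)+1) * (x^(a+1) * (1-x)^b)).intervalIntegrable 0 1)]
      apply intervalIntegral.integral_congr
      intro x _
      ring
    have key : ((a:ℝ)+1) * (∫ x in (0:ℝ)..1, x^a * (1-x)^(b+1))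
        = ((b:ℝ)+1) * (∫ x in (0:ℝ)..1, x^(a+1) * (1-x)^b) := by
      rw [hsplit] at hz
      linarith
    rw [ih (a+1)] at key
    have ha : ((a:ℝ)+1) ≠ 0 := by positivity
    have hfac : ((a+(b+1)+1).factorial : ℝ) ≠ 0 := by
      exact_mod_cast Nat.factorial_ne_zero _
    have harg : a + 1 + b + 1 = a + (b+1) + 1 := by omega
    rw [harg] at key
    have heq : (∫ x in (0:ℝ)..1, x^a * (1-x)^(b+1))
        = ((b:ℝ)+1) * ((((a+1).factorial : ℝ)) * (b.factorial) / ((a+(b+1)+1).factorial)) / ((a:ℝ)+1) := by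
      field_simp at key ⊢
      linarith
    rw [heq, Nat.factorial_succ a, Nat.factorial_succ b]
    push_cast
    field_simp

lemma SL_sq (n : ℕ) : ∫ x in (0:ℝ)..1, (SL n).eval x * (SL n).eval x
    = (n.factorial : ℝ)^2 / (2*n+1) := by
  rw [SL_ibp n n le_rfl (SL n)]
  have h2n : derivative^[n] (SL n) = C (((2*n).factorial : ℝ)) := by
    rw [SL_def, ← Function.iterate_add_apply]
    have : n + n = 2*n := by omega
    rw [this, base_iterate_full]
  rw [h2n, Nat.sub_self, Function.iterate_zero_apply]
  have hcongr : (∫ x in (0:ℝ)..1, (SLbase n).eval x * (C (((2*n).factorial : ℝ))).eval x)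
      = ∫ x in (0:ℝ)..1, ((-1:ℝ)^n * ((2*n).factorial : ℝ)) * (x^n * (1-x)^n) := by
    apply intervalIntegral.integral_congr
    intro x _
    rw [SLbase_def]
    simp only [eval_pow, eval_sub, eval_X, eval_C]
    rw [show (x^2 - x : ℝ) = (-1) * (x * (1-x)) by ring, mul_pow, mul_pow]
    ring
  rw [hcongr, intervalIntegral.integral_const_mul, beta_nat]
  have hfct : (n + n + 1).factorial = (2*n+1) * (2*n).factorial := by
    rw [show n + n + 1 = (2*n) + 1 by omega, Nat.factorial_succ]
  rw [hfct]
  have h1 : ((2*n).factorial : ℝ) ≠ 0 := by exact_mod_cast Nat.factorial_ne_zero _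
  have h2 : ((2*n:ℕ):ℝ)+1 ≠ 0 := by positivity
  have hsq : (-1:ℝ)^n * (-1:ℝ)^n = 1 := by
    rw [← pow_add]
    exact Even.neg_one_pow ⟨n, rfl⟩
  have hre : (-1:ℝ)^n * (((-1:ℝ)^n * ((2*n).factorial : ℝ))
      * ((n.factorial:ℝ) * (n.factorial:ℝ) / (((2*n+1) * (2*n).factorial : ℕ) : ℝ)))
      = ((-1:ℝ)^n * (-1:ℝ)^n) * (((2*n).factorial : ℝ)
      * ((n.factorial:ℝ) * (n.factorial:ℝ) / (((2*n+1) * (2*n).factorial : ℕ) : ℝ))) := by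
    ring
  rw [hre, hsq, one_mul]
  push_cast
  field_simp

-- iterated derivative of finset sums
lemma iterate_derivative_finset_sum {ι : Type*} (k : ℕ) (s : Finset ι) (f : ι → ℝ[X]) :
    derivative^[k] (∑ i ∈ s, f i) = ∑ i ∈ s, derivative^[k] (f i) := by
  induction k with
  | zero => simp
  | succ k ih =>
    rw [Function.iterate_succ_apply', ih, derivative_sum]
    simp [Function.iterate_succ_apply']

lemma SL_eval_one (n : ℕ) : (SL n).eval 1 = (n.factorial : ℝ) := by
  have hbase : SLbase n = ∑ k ∈ Finset.range (n+1), (n.choose k : ℝ[X]) * (X - C 1)^(n+k) := by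
    have e1 : ((X:ℝ[X]) - C 1) + 1 = X := by rw [C_1]; ring
    have e2 : ((X:ℝ[X])^2 - X) = X * (X - C 1) := by rw [C_1]; ring
    rw [SLbase_def, e2, mul_pow]
    nth_rewrite 1 [← e1]
    rw [add_pow, Finset.sum_mul]
    apply Finset.sum_congr rfl
    intro k _
    rw [pow_add]
    ring
  have hSL : SL n = ∑ k ∈ Finset.range (n+1),
      (n.choose k : ℝ[X]) * ((n+k).descFactorial n • (X - C 1)^(n+k-n)) := by
    rw [SL_def, hbase, iterate_derivative_finset_sum]
    apply Finset.sum_congr rfl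
    intro k _
    rw [show ((n.choose k : ℝ[X])) = C ((n.choose k : ℝ)) by simp, iterate_derivative_C_mul,
      iterate_derivative_X_sub_pow]
  rw [hSL, eval_finset_sum]
  rw [Finset.sum_eq_single_of_mem 0 (by simp)]
  · simp [Nat.descFactorial_self]
  · intro k _ hk
    have : n + k - n = k := by omega
    rw [this]
    simp [eval_pow, zero_pow hk]

lemma reflect_comp (n : ℕ) : (SLbase n).comp (C 1 - X) = SLbase n := by
  rw [SLbase_def, pow_comp, sub_comp, pow_comp, X_comp]
  refine congrArg (· ^ n) ?_
  rw [C_1]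
  ring

lemma iterate_derivative_comp_reflect (k : ℕ) (p : ℝ[X]) :
    derivative^[k] (p.comp (C 1 - X)) = (-1 : ℝ[X])^k * (derivative^[k] p).comp (C 1 - X) := by
  induction k with
  | zero => simp
  | succ k ih =>
    rw [Function.iterate_succ_apply', ih, derivative_mul, derivative_pow, derivative_comp]
    rw [Function.iterate_succ_apply' derivative k p]
    simp only [derivative_sub, derivative_C, derivative_X, derivative_neg, derivative_one,
      zero_sub, map_neg]
    ring

lemma SL_reflect (n : ℕ) : (SL n).comp (C 1 - X) = (-1 : ℝ[X])^n * SL n := by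
  have h := iterate_derivative_comp_reflect n (SLbase n)
  rw [reflect_comp, ← SL_def] at h
  have heven : ((-1:ℝ[X])^n) * ((-1:ℝ[X])^n) = 1 := by
    rw [← pow_add]
    exact Even.neg_one_pow ⟨n, rfl⟩
  calc (SL n).comp (C 1 - X)
      = (((-1:ℝ[X])^n) * ((-1:ℝ[X])^n)) * (SL n).comp (C 1 - X) := by rw [heven, one_mul]
    _ = (-1 : ℝ[X])^n * SL n := by rw [mul_assoc, ← h]

lemma SL_eval_zero (n : ℕ) : (SL n).eval 0 = (-1 : ℝ)^n * n.factorial := by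
  have h := congrArg (eval (1:ℝ)) (SL_reflect n)
  rw [eval_comp] at h
  simp only [eval_sub, eval_C, eval_X, sub_self, eval_mul, eval_pow, eval_neg, eval_one] at h
  rw [h, SL_eval_one]

-- Leibniz for multiplication by a polynomial with vanishing third derivative
lemma iterate_derivative_mul_two (g : ℝ[X]) (hg : derivative (derivative (derivative g)) = 0)
    (h : ℝ[X]) (m : ℕ) :
    derivative^[m+2] (g * h) = g * derivative^[m+2] h
      + C ((m:ℝ)+2) * derivative g * derivative^[m+1] h
      + C (((m+2)*(m+1)/2 : ℝ)) * derivative (derivative g) * derivative^[m] h := by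
  induction m with
  | zero =>
    have e : ∀ p : ℝ[X], derivative^[0+2] p = derivative (derivative p) := by
      intro p
      rw [show (0+2 : ℕ) = 1+1 from rfl, Function.iterate_succ_apply',
        Function.iterate_succ_apply', Function.iterate_zero_apply]
    have e1 : ∀ p : ℝ[X], derivative^[0+1] p = derivative p := by
      intro p
      rw [Function.iterate_succ_apply', Function.iterate_zero_apply]
    rw [e, e, e1, Function.iterate_zero_apply]
    simp only [derivative_add, derivative_mul]
    have c1 : (C ((0:ℝ)+2)) = 2 := by
      rw [show ((0:ℝ)+2) = 2 by norm_num]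
      exact map_ofNat C 2
    have c2 : (C (((0:ℝ)+2)*((0:ℝ)+1)/2)) = 1 := by
      rw [show (((0:ℝ)+2)*((0:ℝ)+1)/2) = 1 by norm_num]
      exact C_1
    push_cast
    rw [c1, c2]
    ring
  | succ m ih =>
    rw [Function.iterate_succ_apply' derivative (m+2) (g*h)] at *
    rw [ih]
    simp only [derivative_add, derivative_mul, hg]
    rw [Function.iterate_succ_apply' derivative (m+2) h,
      Function.iterate_succ_apply' derivative (m+1) h,
      Function.iterate_succ_apply' derivative m h]
    simp only [derivative_C, mul_zero, zero_mul, zero_add, add_zero]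
    push_cast
    have c1 : (C ((m:ℝ)+1+2)) = C ((m:ℝ)+2) + C 1 := by
      rw [← C_add]
      congr 1
      ring
    have c2 : (C (((m:ℝ)+1+2)*((m:ℝ)+1+1)/2)) = C (((m:ℝ)+2)*((m:ℝ)+1)/2) + C ((m:ℝ)+2) := by
      rw [← C_add]
      congr 1
      ring
    rw [c1, c2, C_1]
    ring

lemma SL_ode (n : ℕ) (hn : 1 ≤ n) :
    (X^2 - X) * derivative (derivative (SL n)) + (2 * X - 1) * derivative (SL n)
      = C ((n:ℝ)*((n:ℝ)+1)) * SL n := by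
  obtain ⟨m, rfl⟩ : ∃ m, n = m + 1 := ⟨n - 1, by omega⟩
  set u : ℝ[X] := SLbase (m+1) with hu
  set sl : ℝ[X] := SL (m+1) with hsl
  have hg' : derivative ((X:ℝ[X])^2 - X) = 2 * X - 1 := by
    simp only [derivative_sub, derivative_X_pow, derivative_X, map_ofNat]
    norm_num
    exact map_ofNat C 2
  have hq'' : derivative ((2 * X - 1 : ℝ[X])) = 2 := by
    simp only [derivative_sub, derivative_mul, derivative_X, derivative_one, derivative_ofNat]
    ring
  have hg''' : derivative (derivative (derivative ((X:ℝ[X])^2 - X))) = 0 := by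
    rw [hg', hq'']
    simp
  have hq''' : derivative (derivative (derivative ((2 * X - 1 : ℝ[X])))) = 0 := by
    rw [hq'']
    simp
  have h0 : ((X:ℝ[X])^2 - X) * derivative u = C ((m:ℝ)+1) * ((2 * X - 1) * u) := by
    rw [hu, SLbase_def, derivative_pow, hg']
    push_cast
    rw [pow_succ]
    ring
  have heq := congrArg (fun p => derivative^[m+2] p) h0
  rw [iterate_derivative_mul_two _ hg''' (derivative u) m, iterate_derivative_C_mul,
    iterate_derivative_mul_two _ hq''' u m, hg', hq''] at heq
  -- convert iterates
  have hE : derivative^[m+1] u = sl := by rw [hsl, SL_def]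
  have hD : derivative^[m+2] u = derivative sl := by
    rw [show m+2 = (m+1)+1 from rfl, Function.iterate_succ_apply', hE]
  have hA : derivative^[m] (derivative u) = sl := by
    rw [← Function.iterate_succ_apply, hE]
  have hB : derivative^[m+1] (derivative u) = derivative sl := by
    rw [← Function.iterate_succ_apply, hD]
  have hC2 : derivative^[m+2] (derivative u) = derivative (derivative sl) := by
    rw [← Function.iterate_succ_apply, Function.iterate_succ_apply', hD]
  rw [hA, hB, hC2, hD, hE] at heq
  simp only [derivative_ofNat, mul_zero, zero_mul, add_zero] at heq
  -- constant identities
  have k1 : C ((m:ℝ)+2) = C ((m:ℝ)+1) + 1 := by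
    rw [← C_1, ← C_add]
    congr 1
    ring
  have k2 : C (((m:ℝ)+2)*((m:ℝ)+1)/2) * 2 = C ((((m+1):ℕ):ℝ)*((((m+1):ℕ):ℝ)+1)) := by
    rw [show (2:ℝ[X]) = C 2 from (map_ofNat C 2).symm, ← C_mul]
    congr 1
    push_cast
    ring
  have k3 : C ((m:ℝ)+1) * (C ((m:ℝ)+2) * 2)
      = C ((((m+1):ℕ):ℝ)*((((m+1):ℕ):ℝ)+1)) + C ((((m+1):ℕ):ℝ)*((((m+1):ℕ):ℝ)+1)) := by
    rw [show (2:ℝ[X]) = C 2 from (map_ofNat C 2).symm, ← C_mul, ← C_mul, ← C_add]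
    congr 1
    push_cast
    ring
  linear_combination heq - (2 * X - 1) * derivative sl * k1 - sl * k2 + sl * k3

lemma SL_bound (n : ℕ) : ∀ x ∈ Set.Icc (0:ℝ) 1, |(SL n).eval x| ≤ n.factorial := by
  rcases Nat.eq_zero_or_pos n with h0 | hn
  · subst h0
    intro x _
    simp [SL_def, SLbase_def]
  · intro x hx
    set sl : ℝ[X] := SL n with hsl
    set fp : ℝ[X] := C ((n:ℝ)*((n:ℝ)+1)) * sl^2 + (X - X^2) * (derivative sl)^2 with hfp
    have hfp' : derivative fp = (2 * X - 1) * (derivative sl)^2 := by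
      have hode := SL_ode n hn
      rw [hfp]
      simp only [derivative_add, derivative_mul, derivative_pow, derivative_C, derivative_X,
        derivative_sub, derivative_X_pow, zero_mul, mul_one, Nat.cast_ofNat, map_ofNat]
      push_cast
      linear_combination (-2 * derivative sl) * hode
    have hcont : Continuous fun x : ℝ => fp.eval x := fp.continuous
    have hderiv : ∀ x : ℝ, deriv (fun y => fp.eval y) x = (2*x - 1) * ((derivative sl).eval x)^2 := by
      intro x
      rw [Polynomial.deriv, hfp']
      simp [mul_comm]
    have hmono1 : AntitoneOn (fun y => fp.eval y) (Set.Icc 0 (1/2)) := by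
      apply antitoneOn_of_deriv_nonpos (convex_Icc _ _) hcont.continuousOn
      · intro x _
        exact (fp.hasDerivAt x).differentiableAt.differentiableWithinAt
      · intro x hx
        rw [interior_Icc] at hx
        rw [hderiv]
        have h1 : 2*x - 1 ≤ 0 := by
          have := hx.2
          norm_num at this ⊢
          linarith
        nlinarith [sq_nonneg ((derivative sl).eval x)]
    have hmono2 : MonotoneOn (fun y => fp.eval y) (Set.Icc (1/2) 1) := by
      apply monotoneOn_of_deriv_nonneg (convex_Icc _ _) hcont.continuousOn
      · intro x _
        exact (fp.hasDerivAt x).differentiableAt.differentiableWithinAt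
      · intro x hx
        rw [interior_Icc] at hx
        rw [hderiv]
        have h1 : 0 ≤ 2*x - 1 := by
          have := hx.1
          norm_num at this ⊢
          linarith
        nlinarith [sq_nonneg ((derivative sl).eval x)]
    have hsq : ((-1:ℝ)^n) * ((-1:ℝ)^n) = 1 := by
      rw [← pow_add]
      exact Even.neg_one_pow ⟨n, rfl⟩
    have hFp0 : fp.eval 0 = ((n:ℝ)*((n:ℝ)+1)) * (n.factorial:ℝ)^2 := by
      rw [hfp]
      simp only [eval_add, eval_mul, eval_C, eval_pow, eval_sub, eval_X, hsl, SL_eval_zero]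
      have hsq2 : ((-1:ℝ)^n)^2 = 1 := by rw [sq]; exact hsq
      rw [mul_pow, hsq2, one_mul]
      norm_num
    have hFp1 : fp.eval 1 = ((n:ℝ)*((n:ℝ)+1)) * (n.factorial:ℝ)^2 := by
      rw [hfp]
      simp only [eval_add, eval_mul, eval_C, eval_pow, eval_sub, eval_X, hsl, SL_eval_one]
      norm_num
    have hub : fp.eval x ≤ ((n:ℝ)*((n:ℝ)+1)) * (n.factorial:ℝ)^2 := by
      rcases le_or_gt x (1/2) with hc | hc
      · rw [← hFp0]
        exact hmono1 (by constructor <;> norm_num) ⟨hx.1, hc⟩ hx.1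
      · rw [← hFp1]
        exact hmono2 ⟨hc.le, hx.2⟩ (by constructor <;> norm_num) hx.2
    have hlb : ((n:ℝ)*((n:ℝ)+1)) * ((sl.eval x)^2) ≤ fp.eval x := by
      rw [hfp]
      simp only [eval_add, eval_mul, eval_C, eval_pow, eval_sub, eval_X]
      nlinarith [sq_nonneg ((derivative sl).eval x), hx.1, hx.2,
        mul_nonneg (sub_nonneg.mpr hx.2) hx.1]
    have hnn : (0:ℝ) < (n:ℝ)*((n:ℝ)+1) := by
      have : (1:ℝ) ≤ (n:ℝ) := by exact_mod_cast hn
      nlinarith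
    have hr2 : (sl.eval x)^2 ≤ (n.factorial:ℝ)^2 := by
      nlinarith
    have hfnn : (0:ℝ) ≤ (n.factorial:ℝ) := by positivity
    rw [← Real.sqrt_sq hfnn, ← Real.sqrt_sq_eq_abs]
    exact Real.sqrt_le_sqrt hr2

noncomputable def Aker (n : ℕ) : ℝ[X] :=
  ∑ i ∈ Finset.range (n+1), C ((2*(i:ℝ)+1) / ((i.factorial:ℝ))^2 * (SL i).eval 0) * SL i

lemma Aker_natDegree (n : ℕ) : (Aker n).natDegree ≤ n := by
  apply Polynomial.natDegree_sum_le_of_forall_le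
  intro i hi
  exact le_trans (natDegree_C_mul_le _ _) (le_trans (SL_natDegree i)
    (by simpa using Nat.lt_succ_iff.mp (Finset.mem_range.mp hi)))

lemma Aker_SL (n m : ℕ) (hm : m ≤ n) :
    ∫ x in (0:ℝ)..1, (Aker n).eval x * (SL m).eval x = (SL m).eval 0 := by
  have hcong : (fun x => (Aker n).eval x * (SL m).eval x)
      = fun x => ∑ i ∈ Finset.range (n+1),
          ((2*(i:ℝ)+1) / ((i.factorial:ℝ))^2 * (SL i).eval 0)
            * ((SL i).eval x * (SL m).eval x) := by
    funext x
    rw [Aker, eval_finset_sum, Finset.sum_mul]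
    apply Finset.sum_congr rfl
    intro i _
    rw [eval_mul, eval_C]
    ring
  rw [hcong, intervalIntegral.integral_finset_sum]
  swap
  · intro i _
    exact ((continuous_const.mul (((SL i).continuous).mul
      ((SL m).continuous)))).intervalIntegrable _ _
  have hsum : ∀ i ∈ Finset.range (n+1), i ≠ m →
      (∫ x in (0:ℝ)..1, ((2*(i:ℝ)+1) / ((i.factorial:ℝ))^2 * (SL i).eval 0)
        * ((SL i).eval x * (SL m).eval x)) = 0 := by
    intro i _ him
    rw [intervalIntegral.integral_const_mul]
    rcases lt_or_gt_of_ne him with hlt | hgt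
    · have horth := SL_orth m (SL i) (lt_of_le_of_lt (SL_natDegree i) hlt)
      have : (∫ x in (0:ℝ)..1, (SL i).eval x * (SL m).eval x)
          = ∫ x in (0:ℝ)..1, (SL m).eval x * (SL i).eval x := by
        apply intervalIntegral.integral_congr
        intro x _
        ring
      rw [this, horth, mul_zero]
    · rw [SL_orth i (SL m) (lt_of_le_of_lt (SL_natDegree m) hgt), mul_zero]
  rw [Finset.sum_eq_single_of_mem m (Finset.mem_range.mpr (by omega)) hsum,
    intervalIntegral.integral_const_mul, SL_sq]
  have h1 : ((m.factorial:ℝ)) ≠ 0 := by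
    exact_mod_cast Nat.factorial_ne_zero m
  have h2 : (2*(m:ℝ)+1) ≠ 0 := by positivity
  field_simp

lemma sum_odd (m : ℕ) : ∑ i ∈ Finset.range m, (2*(i:ℝ)+1) = (m:ℝ)^2 := by
  induction m with
  | zero => simp
  | succ m ih =>
    rw [Finset.sum_range_succ, ih]
    push_cast
    ring

lemma Aker_bound (n : ℕ) : ∀ x ∈ Set.Icc (0:ℝ) 1, |(Aker n).eval x| ≤ ((n:ℝ)+1)^2 := by
  intro x hx
  rw [Aker, eval_finset_sum]
  calc |∑ i ∈ Finset.range (n+1), (C ((2*(i:ℝ)+1) / ((i.factorial:ℝ))^2 * (SL i).eval 0) * SL i).eval x|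
      ≤ ∑ i ∈ Finset.range (n+1), |(C ((2*(i:ℝ)+1) / ((i.factorial:ℝ))^2 * (SL i).eval 0) * SL i).eval x| :=
        by exact Finset.abs_sum_le_sum_abs _ _
    _ ≤ ∑ i ∈ Finset.range (n+1), (2*(i:ℝ)+1) := by
        apply Finset.sum_le_sum
        intro i _
        rw [eval_mul, eval_C, SL_eval_zero]
        have hfpos : (0:ℝ) < (i.factorial:ℝ) := by
          exact_mod_cast Nat.factorial_pos i
        have hb := SL_bound i x hx
        have habs : |(2*(i:ℝ)+1) / ((i.factorial:ℝ))^2 * ((-1:ℝ)^i * i.factorial)|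
            = (2*(i:ℝ)+1) / (i.factorial:ℝ) := by
          rw [abs_mul, abs_mul, abs_pow, abs_neg, abs_one, one_pow, one_mul,
            abs_div, abs_pow]
          rw [abs_of_nonneg (by positivity : (0:ℝ) ≤ 2*(i:ℝ)+1),
            abs_of_nonneg hfpos.le]
          field_simp
        rw [abs_mul, habs]
        calc (2*(i:ℝ)+1) / (i.factorial:ℝ) * |(SL i).eval x|
            ≤ (2*(i:ℝ)+1) / (i.factorial:ℝ) * (i.factorial:ℝ) := by
              apply mul_le_mul_of_nonneg_left hb (by positivity)
          _ = (2*(i:ℝ)+1) := by field_simp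
    _ = ((n:ℝ)+1)^2 := by
        rw [sum_odd]
        push_cast
        ring

lemma Aker_repro (n : ℕ) : ∀ d : ℕ, d ≤ n → ∀ p : ℝ[X], p.natDegree ≤ d →
    ∫ x in (0:ℝ)..1, (Aker n).eval x * p.eval x = p.eval 0 := by
  intro d
  induction d using Nat.strong_induction_on with
  | _ d ih =>
    intro hdn p hpd
    by_cases h0 : p.natDegree = 0
    · obtain ⟨c, rfl⟩ := Polynomial.natDegree_eq_zero.mp h0
      have h1 := Aker_SL n 0 (by omega)
      rw [SL_one] at h1
      simp only [eval_one, mul_one, eval_C] at h1 ⊢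
      rw [show (fun x => (Aker n).eval x * c) = fun x => c * (Aker n).eval x from by
          funext x; ring,
        intervalIntegral.integral_const_mul, h1, mul_one]
    · set d' := p.natDegree with hd'
      have hd'pos : 0 < d' := Nat.pos_of_ne_zero h0
      have hdesc : (((2*d').descFactorial d' : ℕ) : ℝ) ≠ 0 := by
        rw [Nat.cast_ne_zero, Ne, Nat.descFactorial_eq_zero_iff_lt]
        omega
      set κ : ℝ := p.coeff d' / (((2*d').descFactorial d' : ℕ) : ℝ) with hκ
      set q : ℝ[X] := p - C κ * SL d' with hqdef
      have hcoef : (C κ * SL d').coeff d' = p.coeff d' := by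
        rw [coeff_C_mul, SL_coeff, hκ]
        field_simp
      have hqle : q.natDegree ≤ d' := by
        apply le_trans (natDegree_sub_le _ _)
        simp only [max_le_iff]
        exact ⟨le_of_eq hd'.symm, le_trans (natDegree_C_mul_le _ _) (SL_natDegree d')⟩
      have hq0 : q.coeff d' = 0 := by
        rw [hqdef, coeff_sub, hcoef, sub_self]
      have hqdeg : q.natDegree < d' := by
        rcases eq_or_ne q 0 with h | h
        · rw [h, natDegree_zero]; exact hd'pos
        · refine lt_of_le_of_ne hqle fun hc => h ?_
          apply Polynomial.leadingCoeff_eq_zero.mp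
          rw [Polynomial.leadingCoeff, hc]
          exact hq0
      have hsplit : p = C κ * SL d' + q := by rw [hqdef]; ring
      have hint1 : IntervalIntegrable
          (fun x => κ * ((Aker n).eval x * (SL d').eval x)) MeasureTheory.volume 0 1 :=
        (continuous_const.mul (((Aker n).continuous).mul ((SL d').continuous))).intervalIntegrable _ _
      have hint2 : IntervalIntegrable
          (fun x => (Aker n).eval x * q.eval x) MeasureTheory.volume 0 1 :=
        (((Aker n).continuous).mul (q.continuous)).intervalIntegrable _ _
      have hcong : (fun x => (Aker n).eval x * p.eval x)
          = fun x => κ * ((Aker n).eval x * (SL d').eval x) + (Aker n).eval x * q.eval x := by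
        funext x
        conv_lhs => rw [hsplit]
        rw [eval_add, eval_mul, eval_C]
        ring
      rw [hcong, intervalIntegral.integral_add hint1 hint2,
        intervalIntegral.integral_const_mul,
        Aker_SL n d' (le_trans hpd hdn),
        ih q.natDegree (lt_of_lt_of_le hqdeg hpd) (le_trans hqle (le_trans hpd hdn)) q le_rfl]
      conv_rhs => rw [hsplit]
      rw [eval_add, eval_mul, eval_C]

noncomputable def AS (n : ℕ) (t₀ t₁ : ℝ) : ℝ[X] :=
  C (t₁ - t₀)⁻¹ * (Aker n).comp (C (t₁ - t₀)⁻¹ * (X - C t₀))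

lemma AS_natDegree (n : ℕ) (t₀ t₁ : ℝ) : (AS n t₀ t₁).natDegree ≤ n := by
  refine le_trans (natDegree_C_mul_le _ _) (le_trans natDegree_comp_le ?_)
  have h1 : (C (t₁ - t₀)⁻¹ * (X - C t₀)).natDegree ≤ 1 :=
    le_trans (natDegree_C_mul_le _ _) (le_of_eq (natDegree_X_sub_C t₀))
  calc (Aker n).natDegree * (C (t₁ - t₀)⁻¹ * (X - C t₀)).natDegree
      ≤ (Aker n).natDegree * 1 := Nat.mul_le_mul_left _ h1
    _ ≤ n := by rw [mul_one]; exact Aker_natDegree n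

lemma AS_eval (n : ℕ) (t₀ t₁ t : ℝ) :
    (AS n t₀ t₁).eval t = (t₁ - t₀)⁻¹ * (Aker n).eval ((t₁ - t₀)⁻¹ * (t - t₀)) := by
  rw [AS, eval_mul, eval_C, eval_comp, eval_mul, eval_C, eval_sub, eval_X, eval_C]

lemma AS_repro (n : ℕ) (t₀ t₁ : ℝ) (h : t₀ < t₁) (p : ℝ[X]) (hp : p.natDegree ≤ n) :
    ∫ t in t₀..t₁, (AS n t₀ t₁).eval t * p.eval t = p.eval t₀ := by
  set τ : ℝ := t₁ - t₀ with hτdef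
  have hτ : 0 < τ := sub_pos.mpr h
  have hτ0 : τ ≠ 0 := ne_of_gt hτ
  have hτi : τ⁻¹ ≠ 0 := inv_ne_zero hτ0
  set P : ℝ[X] := p.comp (C τ * X + C t₀) with hP
  have hPdeg : P.natDegree ≤ n := by
    refine le_trans natDegree_comp_le ?_
    have h1 : (C τ * X + C t₀).natDegree ≤ 1 := by
      refine le_trans (natDegree_add_le _ _) ?_
      simp only [max_le_iff, natDegree_C]
      exact ⟨le_trans (natDegree_C_mul_le _ _) (le_of_eq natDegree_X), by omega⟩
    calc p.natDegree * (C τ * X + C t₀).natDegree ≤ p.natDegree * 1 :=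
        Nat.mul_le_mul_left _ h1
      _ ≤ n := by rw [mul_one]; exact hp
  set f : ℝ → ℝ := fun s => τ⁻¹ * ((Aker n).eval s * P.eval s) with hf
  have hcong : (fun t => (AS n t₀ t₁).eval t * p.eval t)
      = fun t => f (τ⁻¹ * t + (-t₀ * τ⁻¹)) := by
    funext t
    simp only [hf, hP, AS_eval, eval_comp, eval_add, eval_mul, eval_C, eval_X]
    rw [← hτdef]
    have harg : τ * (τ⁻¹ * t + (-t₀ * τ⁻¹)) + t₀ = t := by
      field_simp
      ring
    rw [show τ⁻¹ * (t - t₀) = τ⁻¹ * t + (-t₀ * τ⁻¹) from by ring, harg]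
    ring
  rw [hcong, intervalIntegral.integral_comp_mul_add f hτi (-t₀ * τ⁻¹)]
  have e0 : τ⁻¹ * t₀ + (-t₀ * τ⁻¹) = 0 := by ring
  have e1 : τ⁻¹ * t₁ + (-t₀ * τ⁻¹) = 1 := by
    rw [hτdef]
    rw [neg_mul, ← sub_eq_add_neg, mul_comm t₀, ← mul_sub, inv_mul_cancel₀ (sub_ne_zero.mpr (ne_of_gt h))]
  rw [e0, e1, inv_inv, smul_eq_mul, hf, intervalIntegral.integral_const_mul, ← mul_assoc,
    mul_inv_cancel₀ hτ0, one_mul, Aker_repro n n le_rfl P hPdeg, hP, eval_comp]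
  simp

lemma AS_bound (n : ℕ) (t₀ t₁ : ℝ) (h : t₀ < t₁) :
    ∀ t ∈ Set.Icc t₀ t₁, |(AS n t₀ t₁).eval t| ≤ ((n:ℝ)+1)^2 * (t₁-t₀)⁻¹ := by
  intro t ht
  rw [AS_eval, abs_mul]
  have hτ : 0 < t₁ - t₀ := sub_pos.mpr h
  have harg : (t₁-t₀)⁻¹ * (t - t₀) ∈ Set.Icc (0:ℝ) 1 := by
    constructor
    · exact mul_nonneg (inv_nonneg.mpr hτ.le) (sub_nonneg.mpr ht.1)
    · rw [mul_comm, ← div_eq_mul_inv, div_le_one hτ]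
      exact sub_le_sub_right ht.2 t₀
  have hb := Aker_bound n _ harg
  rw [abs_of_nonneg (inv_nonneg.mpr hτ.le)]
  calc (t₁-t₀)⁻¹ * |(Aker n).eval ((t₁-t₀)⁻¹ * (t - t₀))|
      ≤ (t₁-t₀)⁻¹ * (((n:ℝ)+1)^2) := mul_le_mul_of_nonneg_left hb (by positivity)
    _ = ((n:ℝ)+1)^2 * (t₁-t₀)⁻¹ := mul_comm _ _

lemma zero_of_integral_zero {a b : ℝ} (hab : a < b) (h : ℝ → ℝ) (hc : Continuous h)
    (hnn : ∀ x, 0 ≤ h x) (hint : (∫ x in a..b, h x) = 0) :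
    ∀ x ∈ Set.Icc a b, h x = 0 := by
  intro x hx
  by_contra hne
  have hpos : 0 < h x := lt_of_le_of_ne (hnn x) (Ne.symm hne)
  obtain ⟨δ, hδ, H⟩ := Metric.continuous_iff.mp hc x (h x / 2) (by positivity)
  set l : ℝ := max a (x - δ/2) with hl
  set r : ℝ := min b (x + δ/2) with hr
  have hal : a ≤ l := le_max_left _ _
  have hrb : r ≤ b := min_le_left _ _
  have hlr : l < r := by
    simp only [hl, hr, lt_min_iff, max_lt_iff]
    refine ⟨⟨hab, by linarith [hx.2]⟩, ⟨by linarith [hx.1], by linarith⟩⟩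
  have hlow : ∀ y ∈ Set.Icc l r, h x / 2 ≤ h y := by
    intro y hy
    have h1 : x - δ/2 ≤ y := le_trans (le_max_right _ _) hy.1
    have h2 : y ≤ x + δ/2 := le_trans hy.2 (min_le_right _ _)
    have hdist : dist y x < δ := by
      rw [Real.dist_eq, abs_lt]
      constructor <;> linarith
    have := H y hdist
    rw [Real.dist_eq, abs_lt] at this
    linarith [this.1]
  have hi1 : IntervalIntegrable h MeasureTheory.volume a l := hc.intervalIntegrable _ _
  have hi2 : IntervalIntegrable h MeasureTheory.volume l r := hc.intervalIntegrable _ _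
  have hi3 : IntervalIntegrable h MeasureTheory.volume r b := hc.intervalIntegrable _ _
  have hsplit1 : (∫ y in a..l, h y) + (∫ y in l..r, h y) = ∫ y in a..r, h y :=
    intervalIntegral.integral_add_adjacent_intervals hi1 hi2
  have hsplit2 : (∫ y in a..r, h y) + (∫ y in r..b, h y) = ∫ y in a..b, h y :=
    intervalIntegral.integral_add_adjacent_intervals (hc.intervalIntegrable _ _) hi3
  have hn1 : 0 ≤ ∫ y in a..l, h y :=
    intervalIntegral.integral_nonneg hal (fun u _ => hnn u)
  have hn3 : 0 ≤ ∫ y in r..b, h y :=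
    intervalIntegral.integral_nonneg hrb (fun u _ => hnn u)
  have hmid : (r - l) * (h x / 2) ≤ ∫ y in l..r, h y := by
    have := intervalIntegral.integral_mono_on (f := fun _ => h x / 2) (g := h) hlr.le
      (intervalIntegrable_const) hi2 hlow
    rwa [intervalIntegral.integral_const, smul_eq_mul] at this
  have hmidpos : 0 < (r - l) * (h x / 2) := by
    apply mul_pos (by linarith) (by positivity)
  linarith

lemma polycoeffs_zero {H : Type*} [NormedAddCommGroup H] [InnerProductSpace ℝ H]
    (m : ℕ) (c : ℕ → H) (hzero : ∀ t : ℝ, ∑ i ∈ Finset.range m, t^i • c i = 0) :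
    ∀ i, i < m → c i = 0 := by
  intro i him
  have hz : ⟪c i, c i⟫ = (0:ℝ) := by
    set z := c i with hzdef
    set p : ℝ[X] := ∑ j ∈ Finset.range m, C (⟪c j, z⟫) * X ^ j with hp
    have hpz : ∀ t : ℝ, p.eval t = 0 := by
      intro t
      rw [hp, eval_finset_sum]
      simp only [eval_mul, eval_C, eval_pow, eval_X]
      have h2 := congrArg (fun y => (⟪y, z⟫)) (hzero t)
      simp only [sum_inner, real_inner_smul_left, inner_zero_left] at h2
      rw [← h2]
      apply Finset.sum_congr rfl
      intro j _
      ring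
    have hp0 : p = 0 := Polynomial.funext (fun r => by rw [hpz r]; simp)
    have hco := congrArg (fun q : ℝ[X] => q.coeff i) hp0
    simp only [hp, finset_sum_coeff, coeff_C_mul, coeff_X_pow, coeff_zero,
      mul_ite, mul_one, mul_zero] at hco
    rw [Finset.sum_ite_eq (Finset.range m) i (fun j => ⟪c j, z⟫),
      if_pos (Finset.mem_range.mpr him)] at hco
    simpa [hzdef] using hco
  exact inner_self_eq_zero.mp hz


end LegendreAux

/-- Evaluation of the `H`-valued polynomial with coefficients `c` (degree at most `k`):
`t ↦ ∑_{i=0}^{k} tⁱ • c i`. -/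
noncomputable def polyEval {H : Type*} [NormedAddCommGroup H] [NormedSpace ℝ H]
    (k : ℕ) (c : ℕ → H) (t : ℝ) : H :=
  ∑ i ∈ Finset.range (k + 1), t ^ i • c i

/-- Coefficients of the termwise derivative of the polynomial with coefficients `c`. -/
noncomputable def dC {H : Type*} [NormedAddCommGroup H] [NormedSpace ℝ H]
    (c : ℕ → H) : ℕ → H := fun i => ((i : ℝ) + 1) • c (i + 1)

/-- `u` is the coefficient function of the time reconstruction `Û` (degree at most `q+1`)
of the polynomial `V` with coefficients `v` (degree at most `q`), with jump `j`, on `[t₀, t₁]`. -/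
def IsTimeRecon {H : Type*} [NormedAddCommGroup H] [InnerProductSpace ℝ H]
    (t₀ t₁ : ℝ) (q : ℕ) (v : ℕ → H) (j : H) (u : ℕ → H) : Prop :=
  (∀ i, q + 1 < i → u i = 0) ∧
  (∀ w : ℕ → H, (∀ i, q ≤ i → w i = 0) →
    (∫ t in t₀..t₁,
        ⟪polyEval (q + 1) (dC (dC u)) t - polyEval (q + 1) (dC (dC v)) t,
          polyEval (q + 1) w t⟫) = ⟪j, polyEval (q + 1) w t₀⟫) ∧
  polyEval (q + 1) u t₀ = polyEval (q + 1) v t₀ ∧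
  polyEval (q + 1) (dC u) t₀ = polyEval (q + 1) (dC v) t₀ - j

/-- `P` is the orthogonal projection of the Hilbert space `H` onto the closed subspace `F`. -/
def IsOrthProj {H : Type*} [NormedAddCommGroup H] [InnerProductSpace ℝ H]
    (F : Submodule ℝ H) (P : H →L[ℝ] H) : Prop :=
  ∀ x : H, P x ∈ F ∧ ∀ y ∈ F, ⟪x - P x, y⟫ = 0


lemma polyEval_def {H : Type*} [NormedAddCommGroup H] [NormedSpace ℝ H]
    (k : ℕ) (c : ℕ → H) (t : ℝ) :
    polyEval k c t = ∑ i ∈ Finset.range (k + 1), t ^ i • c i := rfl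

lemma polyEval_sub {H : Type*} [NormedAddCommGroup H] [NormedSpace ℝ H]
    (k : ℕ) (c d : ℕ → H) (t : ℝ) :
    polyEval k (fun i => c i - d i) t = polyEval k c t - polyEval k d t := by
  simp [polyEval_def, smul_sub, Finset.sum_sub_distrib]

lemma polyEval_coeff_smul {H : Type*} [NormedAddCommGroup H] [NormedSpace ℝ H]
    (k : ℕ) (p : ℝ[X]) (hdeg : p.natDegree < k + 1) (y : H) (t : ℝ) :
    polyEval k (fun i => p.coeff i • y) t = p.eval t • y := by
  rw [polyEval_def, Polynomial.eval_eq_sum_range' hdeg t, Finset.sum_smul]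
  apply Finset.sum_congr rfl
  intro i _
  rw [smul_smul, mul_comm, ← smul_smul]

lemma polyEval_continuous {H : Type*} [NormedAddCommGroup H] [NormedSpace ℝ H]
    (k : ℕ) (c : ℕ → H) : Continuous fun t : ℝ => polyEval k c t := by
  simp only [polyEval_def]
  apply continuous_finset_sum
  intro i _
  exact (continuous_pow i).smul continuous_const

set_option maxHeartbeats 2000000 in
/-- Spatial error of the time reconstruction, second time derivative (Lemma 4.3, ℓ = 2):
`sup_{t ∈ [t₀,t₁]} ‖ρ₀ (Û - PÛ)''(t)‖ ≤ 4√2 q(q+1) τ⁻¹ ‖ρ₀ P^⊥ w₀‖`, where `M` is the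
multiplication operator by the nonnegative essentially bounded weight `ρ₀` on `L²(X, μ)`. -/
theorem spatial_error_time_reconstruction_second_deriv
    {X : Type*} [MeasurableSpace X] (μ : Measure X)
    (ρ₀ : X → ℝ) (hρ_meas : Measurable ρ₀) (hρ_nn : ∀ x, 0 ≤ ρ₀ x)
    (hρ_bd : ∃ C : ℝ, ∀ᵐ x ∂μ, ρ₀ x ≤ C)
    (M : Lp ℝ 2 μ →ₗ[ℝ] Lp ℝ 2 μ)
    (hM : ∀ f : Lp ℝ 2 μ, (M f : X → ℝ) =ᵐ[μ] fun x => ρ₀ x * f x)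
    (F : Submodule ℝ (Lp ℝ 2 μ)) (hF : IsClosed (F : Set (Lp ℝ 2 μ)))
    (P : Lp ℝ 2 μ →L[ℝ] Lp ℝ 2 μ) (hP : IsOrthProj F P)
    (t₀ t₁ : ℝ) (h01 : t₀ < t₁) (q : ℕ) (hq : 2 ≤ q)
    (v : ℕ → Lp ℝ 2 μ) (hv : ∀ i, q < i → v i = 0)
    (hvF : ∀ t : ℝ, polyEval (q + 1) v t ∈ F)
    (w₀ : Lp ℝ 2 μ) (u : ℕ → Lp ℝ 2 μ)
    (hu : IsTimeRecon t₀ t₁ q v (polyEval (q + 1) (dC v) t₀ - w₀) u) :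
    (⨆ t : Set.Icc t₀ t₁,
        ‖M (polyEval (q + 1) (dC (dC u)) t - P (polyEval (q + 1) (dC (dC u)) t))‖)
      ≤ 4 * Real.sqrt 2 * (q : ℝ) * ((q : ℝ) + 1) * (t₁ - t₀)⁻¹ * ‖M (w₀ - P w₀)‖ := by
  obtain ⟨hu0, huint, -, -⟩ := hu
  set τ : ℝ := t₁ - t₀ with hτdef
  have hτ : 0 < τ := sub_pos.mpr h01
  set n : ℕ := q - 1 with hn
  have hqn : (n:ℝ) + 1 = (q:ℝ) := by
    have h1 : n + 1 = q := by omega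
    exact_mod_cast congrArg (Nat.cast (R := ℝ)) h1
  set j : Lp ℝ 2 μ := polyEval (q+1) (dC v) t₀ - w₀ with hjdef
  set Q : Lp ℝ 2 μ →ₗ[ℝ] Lp ℝ 2 μ :=
    (LinearMap.id : Lp ℝ 2 μ →ₗ[ℝ] Lp ℝ 2 μ) - (P : Lp ℝ 2 μ →ₗ[ℝ] Lp ℝ 2 μ) with hQdef
  have hQ : ∀ x, Q x = x - P x := by
    intro x
    simp [hQdef]
  have hmemQ : ∀ x, x ∈ F → Q x = 0 := by
    intro x hxF
    have h1 := (hP x).1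
    have h2 := (hP x).2 (x - P x) (Submodule.sub_mem F hxF h1)
    rw [hQ]
    exact inner_self_eq_zero.mp h2
  have hQv : ∀ i, Q (v i) = 0 := by
    have hzero : ∀ t : ℝ, ∑ i ∈ Finset.range (q+2), t^i • Q (v i) = 0 := by
      intro t
      calc ∑ i ∈ Finset.range (q+2), t^i • Q (v i)
          = ∑ i ∈ Finset.range (q+2), Q (t^i • v i) := by
            apply Finset.sum_congr rfl
            intro i _
            rw [_root_.map_smul]
        _ = Q (∑ i ∈ Finset.range (q+2), t^i • v i) := (_root_.map_sum Q _ _).symm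
        _ = Q (polyEval (q+1) v t) := by rw [polyEval_def]
        _ = 0 := hmemQ _ (hvF t)
    intro i
    rcases lt_or_ge i (q+2) with hi | hi
    · exact polycoeffs_zero (q+2) (fun i => Q (v i)) hzero i hi
    · rw [hv i (by omega), _root_.map_zero]
  have hQdv : ∀ i, Q (dC v i) = 0 := by
    intro i
    show Q (((i:ℝ)+1) • v (i+1)) = 0
    rw [_root_.map_smul, hQv, smul_zero]
  have hQddv : ∀ i, Q (dC (dC v) i) = 0 := by
    intro i
    show Q (((i:ℝ)+1) • dC v (i+1)) = 0
    rw [_root_.map_smul, hQdv, smul_zero]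
  have hQj : Q j = - Q w₀ := by
    rw [hjdef, _root_.map_sub]
    have h2 : Q (polyEval (q+1) (dC v) t₀) = 0 := by
      rw [polyEval_def, _root_.map_sum]
      apply Finset.sum_eq_zero
      intro i _
      rw [_root_.map_smul, hQdv, smul_zero]
    rw [h2, zero_sub]
  set Ap : ℝ[X] := AS n t₀ t₁ with hApdef
  have hApdeg : Ap.natDegree ≤ n := AS_natDegree n t₀ t₁
  have hApc : ∀ i, q ≤ i → Ap.coeff i = 0 := by
    intro i hi
    exact Polynomial.coeff_eq_zero_of_natDegree_lt (lt_of_le_of_lt hApdeg (by omega))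
  set gC : ℕ → Lp ℝ 2 μ := fun i => dC (dC u) i - dC (dC v) i with hgC
  have hgC0 : ∀ i, q ≤ i → gC i = 0 := by
    intro i hi
    show dC (dC u) i - dC (dC v) i = 0
    show ((i:ℝ)+1) • dC u (i+1) - ((i:ℝ)+1) • dC v (i+1) = 0
    show ((i:ℝ)+1) • ((((i+1):ℕ):ℝ)+1) • u (i+1+1) - ((i:ℝ)+1) • ((((i+1):ℕ):ℝ)+1) • v (i+1+1) = 0
    rw [hu0 (i+1+1) (by omega), hv (i+1+1) (by omega)]
    simp
  set rC : ℕ → Lp ℝ 2 μ := fun i => gC i - Ap.coeff i • j with hrC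
  have hrC0 : ∀ i, q ≤ i → rC i = 0 := by
    intro i hi
    show gC i - Ap.coeff i • j = 0
    rw [hgC0 i hi, hApc i hi, zero_smul, sub_zero]
  have hRid : ∀ t : ℝ, polyEval (q+1) rC t
      = (polyEval (q+1) (dC (dC u)) t - polyEval (q+1) (dC (dC v)) t) - Ap.eval t • j := by
    intro t
    have h1 : polyEval (q+1) rC t
        = polyEval (q+1) gC t - polyEval (q+1) (fun i => Ap.coeff i • j) t :=
      polyEval_sub (q+1) gC (fun i => Ap.coeff i • j) t
    rw [h1, polyEval_coeff_smul (q+1) Ap (by omega) j t,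
      polyEval_sub (q+1) (dC (dC u)) (dC (dC v)) t]
  have hint1 := huint rC hrC0
  set pj : ℝ[X] := ∑ i ∈ Finset.range q, C (⟪j, rC i⟫) * Polynomial.X ^ i with hpj
  have hpjdeg : pj.natDegree ≤ n := by
    apply Polynomial.natDegree_sum_le_of_forall_le
    intro i hi
    refine le_trans (Polynomial.natDegree_C_mul_le _ _) ?_
    rw [Polynomial.natDegree_X_pow]
    have := Finset.mem_range.mp hi
    omega
  have hpjeval : ∀ t : ℝ, ⟪j, polyEval (q+1) rC t⟫ = pj.eval t := by
    intro t
    have hsub : ∑ i ∈ Finset.range (q+2), t^i * ⟪j, rC i⟫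
        = ∑ i ∈ Finset.range q, t^i * ⟪j, rC i⟫ := by
      symm
      apply Finset.sum_subset (Finset.range_subset_range.mpr (by omega))
      intro i _ hi
      rw [hrC0 i (by simpa [Finset.mem_range, not_lt] using hi)]
      simp
    calc ⟪j, polyEval (q+1) rC t⟫
        = ∑ i ∈ Finset.range (q+2), t^i * ⟪j, rC i⟫ := by
          rw [polyEval_def, inner_sum]
          apply Finset.sum_congr rfl
          intro i _
          rw [real_inner_smul_right]
      _ = ∑ i ∈ Finset.range q, t^i * ⟪j, rC i⟫ := hsub
      _ = pj.eval t := by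
          rw [hpj, Polynomial.eval_finset_sum]
          apply Finset.sum_congr rfl
          intro i _
          rw [Polynomial.eval_mul, Polynomial.eval_C, Polynomial.eval_pow, Polynomial.eval_X]
          ring
  have hkey2 : (∫ t in t₀..t₁, ⟪Ap.eval t • j, polyEval (q+1) rC t⟫)
      = ⟪j, polyEval (q+1) rC t₀⟫ := by
    have hfun : (fun t => ⟪Ap.eval t • j, polyEval (q+1) rC t⟫)
        = fun t => Ap.eval t * pj.eval t := by
      funext t
      rw [real_inner_smul_left, hpjeval t]
    rw [hfun, AS_repro n t₀ t₁ h01 pj hpjdeg, ← hpjeval t₀]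
  have hintg1 : IntervalIntegrable
      (fun t => ⟪polyEval (q+1) (dC (dC u)) t - polyEval (q+1) (dC (dC v)) t,
        polyEval (q+1) rC t⟫) volume t₀ t₁ :=
    (Continuous.inner ((polyEval_continuous _ _).sub (polyEval_continuous _ _))
      (polyEval_continuous _ _)).intervalIntegrable _ _
  have hintg2 : IntervalIntegrable
      (fun t => ⟪Ap.eval t • j, polyEval (q+1) rC t⟫) volume t₀ t₁ :=
    (Continuous.inner ((Ap.continuous).smul continuous_const)
      (polyEval_continuous _ _)).intervalIntegrable _ _
  have hzero : (∫ t in t₀..t₁, ⟪polyEval (q+1) rC t, polyEval (q+1) rC t⟫) = 0 := by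
    have hdiff : (fun t => ⟪polyEval (q+1) rC t, polyEval (q+1) rC t⟫)
        = fun t => ⟪polyEval (q+1) (dC (dC u)) t - polyEval (q+1) (dC (dC v)) t,
            polyEval (q+1) rC t⟫ - ⟪Ap.eval t • j, polyEval (q+1) rC t⟫ := by
      funext t
      rw [← inner_sub_left, ← hRid t]
    rw [hdiff, intervalIntegral.integral_sub hintg1 hintg2, hint1, hkey2, sub_self]
  have hRzero : ∀ t ∈ Set.Icc t₀ t₁, polyEval (q+1) rC t = 0 := by
    intro t ht
    have h3 := zero_of_integral_zero h01
      (fun t => ⟪polyEval (q+1) rC t, polyEval (q+1) rC t⟫)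
      ((polyEval_continuous _ _).inner (polyEval_continuous _ _))
      (fun x => real_inner_self_nonneg) hzero t ht
    exact inner_self_eq_zero.mp h3
  have hne : Nonempty (Set.Icc t₀ t₁) := Set.nonempty_Icc_subtype h01.le
  apply ciSup_le
  rintro ⟨t, ht⟩
  simp only
  have hgt : polyEval (q+1) (dC (dC u)) t - polyEval (q+1) (dC (dC v)) t = Ap.eval t • j := by
    have h4 := hRid t
    rw [hRzero t ht] at h4
    exact (sub_eq_zero.mp h4.symm)
  have hQDu : polyEval (q+1) (dC (dC u)) t - P (polyEval (q+1) (dC (dC u)) t)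
      = (- Ap.eval t) • Q w₀ := by
    rw [← hQ]
    have hsplit : polyEval (q+1) (dC (dC u)) t
        = (polyEval (q+1) (dC (dC u)) t - polyEval (q+1) (dC (dC v)) t)
          + polyEval (q+1) (dC (dC v)) t := by
      rw [sub_add_cancel]
    rw [hsplit, _root_.map_add]
    have hz2 : Q (polyEval (q+1) (dC (dC v)) t) = 0 := by
      rw [polyEval_def, _root_.map_sum]
      apply Finset.sum_eq_zero
      intro i _
      rw [_root_.map_smul, hQddv, smul_zero]
    rw [hz2, add_zero, hgt, _root_.map_smul, hQj, smul_neg, ← neg_smul]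
  rw [hQDu, _root_.map_smul, norm_smul, Real.norm_eq_abs, abs_neg]
  have hb := AS_bound n t₀ t₁ h01 t ht
  rw [hqn] at hb
  have hQw : Q w₀ = w₀ - P w₀ := hQ w₀
  rw [hQw]
  have hsqrt : (1:ℝ) ≤ Real.sqrt 2 := by
    rw [show (1:ℝ) = Real.sqrt 1 from (Real.sqrt_one).symm]
    exact Real.sqrt_le_sqrt (by norm_num)
  have hqr : (0:ℝ) ≤ (q:ℝ) := Nat.cast_nonneg q
  have hinv : (0:ℝ) ≤ τ⁻¹ := inv_nonneg.mpr hτ.le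
  have hq2 : (q:ℝ)^2 * τ⁻¹ ≤ 4 * Real.sqrt 2 * (q:ℝ) * ((q:ℝ)+1) * τ⁻¹ := by
    apply mul_le_mul_of_nonneg_right _ hinv
    nlinarith [hsqrt, hqr]
  calc |Ap.eval t| * ‖M (w₀ - P w₀)‖
      ≤ ((q:ℝ)^2 * τ⁻¹) * ‖M (w₀ - P w₀)‖ :=
        mul_le_mul_of_nonneg_right hb (norm_nonneg _)
    _ ≤ (4 * Real.sqrt 2 * (q:ℝ) * ((q:ℝ)+1) * τ⁻¹) * ‖M (w₀ - P w₀)‖ :=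
        mul_le_mul_of_nonneg_right hq2 (norm_nonneg _)
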